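/- Fix α ∈ ℂ with Re α > 0 and Im α > 0. Then there exist constants C > 0 and R > 0 such that |φ(α,r) − α·r − q(α)| ≤ C r^{−2} for all r > R. -/

import Mathlib

/-- `w α r = √(1 + α² sinh² r)` (principal branch). -/
noncomputable def w (α : ℂ) (r : ℝ) : ℂ :=
  (1 + α ^ 2 * (Real.sinh r : ℂ) ^ 2) ^ (1 / 2 : ℂ)

/-- `φ(α,r) = α log((α cosh r + w)/√(α²−1)) + (1/2) log((cosh r − w)/(cosh r + w))`
(principal branches). -/
noncomputable def phi (α : ℂ) (r : ℝ) : ℂ :=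
  α * Complex.log ((α * (Real.cosh r : ℂ) + w α r) / ((α ^ 2 - 1) ^ (1 / 2 : ℂ))) +
    (1 / 2 : ℂ) * Complex.log (((Real.cosh r : ℂ) - w α r) / ((Real.cosh r : ℂ) + w α r))

/-- `q(α) = α log(α/√(α²−1)) + (1/2) log((1−α)/(1+α))` (principal branches). -/
noncomputable def qfun (α : ℂ) : ℂ :=
  α * Complex.log (α / ((α ^ 2 - 1) ^ (1 / 2 : ℂ))) +
    (1 / 2 : ℂ) * Complex.log ((1 - α) / (1 + α))

lemma log_locally_lipschitz {z₀ : ℂ} (h : z₀ ∈ Complex.slitPlane) :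
    ∃ δ > (0:ℝ), ∃ L > (0:ℝ), ∀ z : ℂ, ‖z - z₀‖ ≤ δ →
      ‖Complex.log z - Complex.log z₀‖ ≤ L * ‖z - z₀‖ := by
  obtain ⟨ε, hε, hball⟩ := Metric.isOpen_iff.mp Complex.isOpen_slitPlane z₀ h
  have hz0 : z₀ ≠ 0 := Complex.slitPlane_ne_zero h
  have hz0' : 0 < ‖z₀‖ := norm_pos_iff.mpr hz0
  refine ⟨min (ε/2) (‖z₀‖/2), by positivity, 2/‖z₀‖, by positivity, ?_⟩
  intro z hz
  set s : Set ℂ := Metric.closedBall z₀ (min (ε/2) (‖z₀‖/2)) with hs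
  have hsub : s ⊆ Complex.slitPlane := by
    intro x hx
    apply hball
    have h1 : dist x z₀ ≤ min (ε/2) (‖z₀‖/2) := Metric.mem_closedBall.mp hx
    have h2 : dist x z₀ < ε := lt_of_le_of_lt (h1.trans (min_le_left _ _)) (by linarith)
    exact Metric.mem_ball.mpr h2
  have hnorm : ∀ x ∈ s, ‖z₀‖/2 ≤ ‖x‖ := by
    intro x hx
    have hd : ‖x - z₀‖ ≤ ‖z₀‖/2 := by
      have := Metric.mem_closedBall.mp hx
      rw [dist_eq_norm] at this
      exact this.trans (min_le_right _ _)
    have h3 := norm_sub_norm_le z₀ x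
    rw [norm_sub_rev z₀ x] at h3
    linarith
  have key := Convex.norm_image_sub_le_of_norm_hasFDerivWithin_le
    (f := Complex.log) (f' := fun x => ContinuousLinearMap.smulRight (1 : ℂ →L[ℂ] ℂ) x⁻¹)
    (s := s) (C := 2/‖z₀‖)
    (fun x hx => (Complex.hasDerivAt_log (hsub hx)).hasFDerivAt.hasFDerivWithinAt)
    (fun x hx => by
      rw [ContinuousLinearMap.norm_smulRight_apply, norm_one, one_mul, norm_inv]
      have hxpos : (0:ℝ) < ‖x‖ := lt_of_lt_of_le (by positivity) (hnorm x hx)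
      rw [inv_le_comm₀ hxpos (by positivity)]
      calc (2/‖z₀‖)⁻¹ = ‖z₀‖/2 := by field_simp
        _ ≤ ‖x‖ := hnorm x hx)
    (convex_closedBall _ _)
    (Metric.mem_closedBall_self (by positivity))
    (Metric.mem_closedBall.mpr (by rw [dist_eq_norm]; exact hz))
  exact key

lemma sq_cpow_half {b : ℂ} (hb : b ≠ 0) : (b ^ (1/2 : ℂ)) ^ 2 = b := by
  rw [Complex.cpow_def_of_ne_zero hb, ← Complex.exp_nat_mul]
  have h : ((2:ℕ):ℂ) * (Complex.log b * (1/2)) = Complex.log b := by push_cast; ring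
  rw [h, Complex.exp_log hb]

lemma cpow_half_ne_zero {b : ℂ} (hb : b ≠ 0) : b ^ (1/2 : ℂ) ≠ 0 := by
  intro h
  have := sq_cpow_half hb
  rw [h] at this
  simp at this
  exact hb this.symm

lemma re_cpow_half_nonneg (b : ℂ) : 0 ≤ (b ^ (1/2 : ℂ)).re := by
  rcases eq_or_ne b 0 with h | h
  · rw [h, Complex.zero_cpow (by norm_num : (1/2 : ℂ) ≠ 0)]; simp
  · rw [Complex.cpow_def_of_ne_zero h, Complex.exp_re]
    apply mul_nonneg (Real.exp_nonneg _)
    apply Real.cos_nonneg_of_mem_Icc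
    have him : (Complex.log b * (1/2)).im = b.arg / 2 := by
      have : ((1:ℂ)/2).im = 0 := by norm_num
      rw [Complex.mul_im, this, Complex.log_im]
      norm_num
      ring
    rw [him]
    constructor
    · have := Complex.neg_pi_lt_arg b; linarith
    · have := Complex.arg_le_pi b; linarith

section Estimates

variable (α : ℂ)

lemma im_sq_pos (hre : 0 < α.re) (him : 0 < α.im) : 0 < (α^2).im := by
  rw [pow_two, Complex.mul_im]; nlinarith

lemma b_ne_zero (hre : 0 < α.re) (him : 0 < α.im) {r : ℝ} (hr : 0 < r) :
    (1 + α^2 * (Real.sinh r : ℂ)^2) ≠ 0 := by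
  have hs : 0 < Real.sinh r := Real.sinh_pos_iff.mpr hr
  have h2 : (1 + α^2 * (Real.sinh r : ℂ)^2).im = (α^2).im * (Real.sinh r)^2 := by
    have hcast : ((Real.sinh r : ℂ))^2 = ((Real.sinh r ^ 2 : ℝ) : ℂ) := by push_cast; ring
    rw [hcast, Complex.add_im, Complex.one_im, Complex.mul_im, Complex.ofReal_re,
      Complex.ofReal_im]
    ring
  intro h
  rw [h] at h2
  simp at h2
  have := im_sq_pos α hre him
  rcases h2 with h2 | h2
  · linarith
  · nlinarith
  
lemma w_sq (hre : 0 < α.re) (him : 0 < α.im) {r : ℝ} (hr : 0 < r) :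
    (w α r)^2 = 1 + α^2 * (Real.sinh r : ℂ)^2 :=
  sq_cpow_half (b_ne_zero α hre him hr)

lemma w_re_nonneg (r : ℝ) : 0 ≤ (w α r).re := re_cpow_half_nonneg _

lemma u_est (hre : 0 < α.re) (him : 0 < α.im) :
    ∃ K > (0:ℝ), ∀ r : ℝ, 1 ≤ r →
      ‖w α r * (Real.exp (-r) : ℂ) - α / 2‖ ≤ K * Real.exp (-2*r) := by
  refine ⟨2*(1+‖α‖^2)/α.re, by positivity, ?_⟩
  intro r hr
  set e : ℂ := ((Real.exp (-r) : ℝ) : ℂ) with he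
  have h1 : Real.exp r * Real.exp (-r) = 1 := by rw [← Real.exp_add]; simp
  have hse : (Real.sinh r : ℂ) * e = (1 - e^2)/2 := by
    have h : Real.sinh r * Real.exp (-r) = (1 - Real.exp (-r)^2)/2 := by
      rw [Real.sinh_eq]; linear_combination h1/2
    calc (Real.sinh r : ℂ) * e = ((Real.sinh r * Real.exp (-r) : ℝ) : ℂ) := by
          rw [he]; push_cast; ring
      _ = (((1 - Real.exp (-r)^2)/2 : ℝ) : ℂ) := by rw [h]
      _ = (1 - e^2)/2 := by rw [he]; push_cast; ring
  have hE2 : ((Real.exp (-2*r) : ℝ) : ℂ) = e^2 := by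
    have h : Real.exp (-2*r) = Real.exp (-r)^2 := by
      rw [show -2*r = (-r) + (-r) by ring, Real.exp_add]; ring
    rw [h, he]; push_cast; ring
  have hb := b_ne_zero α hre him (show (0:ℝ) < r by linarith)
  have hw2 := w_sq α hre him (show (0:ℝ) < r by linarith)
  set u : ℂ := w α r * e with hu
  have hure : 0 ≤ u.re := by
    have h : u.re = (w α r).re * Real.exp (-r) := by
      rw [hu, he, Complex.mul_re, Complex.ofReal_re, Complex.ofReal_im]
      ring
    rw [h]
    exact mul_nonneg (w_re_nonneg α r) (Real.exp_pos _).le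
  have hhalf : (α/2 : ℂ).re = α.re/2 := by
    have h2 : (α/2 : ℂ) = α * ((1/2 : ℝ) : ℂ) := by push_cast; ring
    rw [h2, Complex.mul_re, Complex.ofReal_re, Complex.ofReal_im]
    ring
  have hdenre : α.re/2 ≤ (u + α/2).re := by
    rw [Complex.add_re, hhalf]; linarith
  have hdenne : u + α/2 ≠ 0 := by
    intro h; rw [h] at hdenre; simp at hdenre; linarith
  have hfact : u - α/2 = (u^2 - (α/2)^2)/(u + α/2) := by
    rw [eq_div_iff hdenne]; ring
  have hiden : u^2 - (α/2)^2
      = ((Real.exp (-2*r) : ℝ) : ℂ) * (1 - α^2/2 + α^2 * ((Real.exp (-2*r):ℝ):ℂ)/4) := by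
    rw [hE2, hu, mul_pow, hw2]
    linear_combination (α^2 * ((Real.sinh r : ℂ) * e + (1 - e^2)/2)) * hse
  have hEnn : (0:ℝ) ≤ Real.exp (-2*r) := (Real.exp_pos _).le
  have hE1 : Real.exp (-2*r) ≤ 1 := Real.exp_le_one_iff.mpr (by linarith)
  have hnum : ‖u^2 - (α/2)^2‖ ≤ (1 + ‖α‖^2) * Real.exp (-2*r) := by
    rw [hiden, norm_mul, Complex.norm_real, Real.norm_eq_abs, abs_of_pos (Real.exp_pos _),
      mul_comm]
    apply mul_le_mul_of_nonneg_right ?_ hEnn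
    have t1 : ‖(1:ℂ) - α^2/2 + α^2 * ((Real.exp (-2*r):ℝ):ℂ)/4‖
        ≤ ‖(1:ℂ)‖ + ‖α^2/2‖ + ‖α^2 * ((Real.exp (-2*r):ℝ):ℂ)/4‖ := by
      calc ‖(1:ℂ) - α^2/2 + α^2 * ((Real.exp (-2*r):ℝ):ℂ)/4‖
          ≤ ‖(1:ℂ) - α^2/2‖ + ‖α^2 * ((Real.exp (-2*r):ℝ):ℂ)/4‖ := norm_add_le _ _
        _ ≤ ‖(1:ℂ)‖ + ‖α^2/2‖ + ‖α^2 * ((Real.exp (-2*r):ℝ):ℂ)/4‖ := by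
            have := norm_sub_le (1:ℂ) (α^2/2); linarith
    have t2 : ‖α^2/2‖ = ‖α‖^2/2 := by
      rw [norm_div, norm_pow]; norm_num
    have t3 : ‖α^2 * ((Real.exp (-2*r):ℝ):ℂ)/4‖ ≤ ‖α‖^2/4 := by
      rw [norm_div, norm_mul, norm_pow, Complex.norm_real, Real.norm_eq_abs,
        abs_of_pos (Real.exp_pos _)]
      have h4 : ‖(4:ℂ)‖ = 4 := by norm_num
      rw [h4]
      have : ‖α‖^2 * Real.exp (-2*r) ≤ ‖α‖^2 := by nlinarith [sq_nonneg ‖α‖]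
      linarith
    have t4 : ‖(1:ℂ)‖ = 1 := norm_one
    nlinarith [sq_nonneg ‖α‖]
  have hden2 : α.re/2 ≤ ‖u + α/2‖ := by
    refine le_trans hdenre ?_
    exact Complex.re_le_norm _
  calc ‖u - α/2‖ = ‖u^2 - (α/2)^2‖/‖u + α/2‖ := by rw [hfact, norm_div]
    _ ≤ ((1+‖α‖^2) * Real.exp (-2*r))/(α.re/2) :=
        div_le_div₀ (by positivity) hnum (by linarith) hden2
    _ = 2*(1+‖α‖^2)/α.re * Real.exp (-2*r) := by field_simp

end Estimates

section Main

variable (α : ℂ)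

noncomputable def zfun (α : ℂ) (r : ℝ) : ℂ :=
  (Real.exp (-r) : ℂ) * ((α * (Real.cosh r : ℂ) + w α r) / ((α ^ 2 - 1) ^ (1 / 2 : ℂ)))

noncomputable def Bfun (α : ℂ) (r : ℝ) : ℂ :=
  ((Real.cosh r : ℂ) - w α r) / ((Real.cosh r : ℂ) + w α r)

lemma sq_sub_one_ne (hre : 0 < α.re) (him : 0 < α.im) : α ^ 2 - 1 ≠ 0 := by
  have him2 := im_sq_pos α hre him
  intro h
  have h2 := congrArg Complex.im h
  simp [Complex.sub_im, Complex.one_im] at h2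
  linarith

lemma S_sq (hre : 0 < α.re) (him : 0 < α.im) : ((α ^ 2 - 1) ^ (1 / 2 : ℂ)) ^ 2 = α ^ 2 - 1 :=
  sq_cpow_half (sq_sub_one_ne α hre him)

lemma S_ne (hre : 0 < α.re) (him : 0 < α.im) : (α ^ 2 - 1) ^ (1 / 2 : ℂ) ≠ 0 :=
  cpow_half_ne_zero (sq_sub_one_ne α hre him)

lemma div_sq_im_neg (hre : 0 < α.re) (him : 0 < α.im) : (α ^ 2 / (α ^ 2 - 1)).im < 0 := by
  have hβ := im_sq_pos α hre him
  have hne := sq_sub_one_ne α hre him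
  have hnsq : 0 < Complex.normSq (α ^ 2 - 1) := Complex.normSq_pos.mpr hne
  rw [Complex.div_im]
  have h : (α ^ 2).im * (α ^ 2 - 1).re / Complex.normSq (α ^ 2 - 1)
      - (α ^ 2).re * (α ^ 2 - 1).im / Complex.normSq (α ^ 2 - 1)
      = -(α ^ 2).im / Complex.normSq (α ^ 2 - 1) := by
    rw [Complex.sub_re, Complex.sub_im, Complex.one_re, Complex.one_im]; ring
  rw [h]
  exact div_neg_of_neg_of_pos (by linarith) hnsq

lemma zinf_slit (hre : 0 < α.re) (him : 0 < α.im) :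
    α / ((α ^ 2 - 1) ^ (1 / 2 : ℂ)) ∈ Complex.slitPlane := by
  rw [Complex.mem_slitPlane_iff]
  right
  intro h0
  have hsq : (α / ((α ^ 2 - 1) ^ (1 / 2 : ℂ))) ^ 2 = α ^ 2 / (α ^ 2 - 1) := by
    rw [div_pow, S_sq α hre him]
  have him2 := div_sq_im_neg α hre him
  rw [← hsq, pow_two, Complex.mul_im, h0, mul_zero, zero_mul, add_zero] at him2
  exact lt_irrefl 0 him2

lemma Binf_slit (him : 0 < α.im) : (1 - α) / (1 + α) ∈ Complex.slitPlane := by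
  rw [Complex.mem_slitPlane_iff]
  right
  have hne : (1 + α : ℂ) ≠ 0 := by
    intro h
    have h2 := congrArg Complex.im h
    simp [Complex.add_im, Complex.one_im] at h2
    linarith
  have hnsq : 0 < Complex.normSq (1 + α) := Complex.normSq_pos.mpr hne
  rw [Complex.div_im]
  have h : (1 - α).im * (1 + α).re / Complex.normSq (1 + α)
      - (1 - α).re * (1 + α).im / Complex.normSq (1 + α)
      = -(2 * α.im) / Complex.normSq (1 + α) := by
    rw [Complex.sub_im, Complex.sub_re, Complex.add_re, Complex.add_im, Complex.one_im,
      Complex.one_re]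
    ring
  rw [h]
  exact ne_of_lt (div_neg_of_neg_of_pos (by linarith) hnsq)

lemma z_est (hre : 0 < α.re) (him : 0 < α.im) :
    ∃ K > (0:ℝ), ∀ r : ℝ, 1 ≤ r →
      ‖zfun α r - α / ((α ^ 2 - 1) ^ (1 / 2 : ℂ))‖ ≤ K * Real.exp (-2*r) := by
  obtain ⟨K₁, hK₁, hu⟩ := u_est α hre him
  have hSne := S_ne α hre him
  have hSpos : 0 < ‖(α ^ 2 - 1) ^ (1 / 2 : ℂ)‖ := norm_pos_iff.mpr hSne
  refine ⟨(K₁ + ‖α‖/2)/‖(α ^ 2 - 1) ^ (1 / 2 : ℂ)‖, by positivity, ?_⟩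
  intro r hr
  set e : ℂ := ((Real.exp (-r) : ℝ) : ℂ) with he
  have h1 : Real.exp r * Real.exp (-r) = 1 := by rw [← Real.exp_add]; simp
  have hce : (Real.cosh r : ℂ) * e = (1 + e ^ 2) / 2 := by
    have h : Real.cosh r * Real.exp (-r) = (1 + Real.exp (-r) ^ 2) / 2 := by
      rw [Real.cosh_eq]; linear_combination h1 / 2
    calc (Real.cosh r : ℂ) * e = ((Real.cosh r * Real.exp (-r) : ℝ) : ℂ) := by
          rw [he]; push_cast; ring
      _ = (((1 + Real.exp (-r) ^ 2) / 2 : ℝ) : ℂ) := by rw [h]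
      _ = (1 + e ^ 2) / 2 := by rw [he]; push_cast; ring
  have hE2 : ((Real.exp (-2*r) : ℝ) : ℂ) = e ^ 2 := by
    have h : Real.exp (-2*r) = Real.exp (-r) ^ 2 := by
      rw [show -2*r = (-r) + (-r) by ring, Real.exp_add]; ring
    rw [h, he]; push_cast; ring
  have key : zfun α r - α / ((α ^ 2 - 1) ^ (1 / 2 : ℂ))
      = ((w α r * e - α/2) + α * ((Real.exp (-2*r) : ℝ) : ℂ)/2) / ((α ^ 2 - 1) ^ (1 / 2 : ℂ)) := by
    rw [zfun, hE2, ← mul_div_assoc, div_sub_div_same]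
    congr 1
    linear_combination α * hce
  rw [key, norm_div]
  have hnum : ‖(w α r * e - α/2) + α * ((Real.exp (-2*r) : ℝ) : ℂ)/2‖
      ≤ (K₁ + ‖α‖/2) * Real.exp (-2*r) := by
    have t1 := norm_add_le (w α r * e - α/2) (α * ((Real.exp (-2*r) : ℝ) : ℂ)/2)
    have t2 := hu r hr
    have t3 : ‖α * ((Real.exp (-2*r) : ℝ) : ℂ)/2‖ = ‖α‖ * Real.exp (-2*r) / 2 := by
      rw [norm_div, norm_mul, Complex.norm_real, Real.norm_eq_abs,
        abs_of_pos (Real.exp_pos _)]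
      norm_num
    rw [t3] at t1
    calc ‖(w α r * e - α/2) + α * ((Real.exp (-2*r) : ℝ) : ℂ)/2‖
        ≤ ‖w α r * e - α/2‖ + ‖α‖ * Real.exp (-2*r) / 2 := t1
      _ ≤ K₁ * Real.exp (-2*r) + ‖α‖ * Real.exp (-2*r) / 2 := by
          have h5 := hu r hr
          rw [← he] at h5
          linarith
      _ = (K₁ + ‖α‖/2) * Real.exp (-2*r) := by ring
  calc ‖(w α r * e - α/2) + α * ((Real.exp (-2*r) : ℝ) : ℂ)/2‖ / ‖(α ^ 2 - 1) ^ (1 / 2 : ℂ)‖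
      ≤ ((K₁ + ‖α‖/2) * Real.exp (-2*r)) / ‖(α ^ 2 - 1) ^ (1 / 2 : ℂ)‖ := by
        exact div_le_div₀ (by positivity) hnum hSpos le_rfl
    _ = (K₁ + ‖α‖/2)/‖(α ^ 2 - 1) ^ (1 / 2 : ℂ)‖ * Real.exp (-2*r) := by ring

end Main

lemma B_est (α : ℂ) (hre : 0 < α.re) (him : 0 < α.im) :
    ∃ K > (0:ℝ), ∀ r : ℝ, 1 ≤ r →
      ‖Bfun α r - (1 - α) / (1 + α)‖ ≤ K * Real.exp (-2*r) := by
  obtain ⟨K₁, hK₁, hu⟩ := u_est α hre him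
  refine ⟨4 * (K₁ + ‖α‖/2), by positivity, ?_⟩
  intro r hr
  set e : ℂ := ((Real.exp (-r) : ℝ) : ℂ) with he
  have h1 : Real.exp r * Real.exp (-r) = 1 := by rw [← Real.exp_add]; simp
  have heer : (Real.exp r : ℂ) * e = 1 := by
    rw [he, ← Complex.ofReal_mul, h1, Complex.ofReal_one]
  have hce : (Real.cosh r : ℂ) * e = (1 + e ^ 2) / 2 := by
    have h : Real.cosh r * Real.exp (-r) = (1 + Real.exp (-r) ^ 2) / 2 := by
      rw [Real.cosh_eq]; linear_combination h1 / 2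
    calc (Real.cosh r : ℂ) * e = ((Real.cosh r * Real.exp (-r) : ℝ) : ℂ) := by
          rw [he]; push_cast; ring
      _ = (((1 + Real.exp (-r) ^ 2) / 2 : ℝ) : ℂ) := by rw [h]
      _ = (1 + e ^ 2) / 2 := by rw [he]; push_cast; ring
  have hE2 : ((Real.exp (-2*r) : ℝ) : ℂ) = e ^ 2 := by
    have h : Real.exp (-2*r) = Real.exp (-r) ^ 2 := by
      rw [show -2*r = (-r) + (-r) by ring, Real.exp_add]; ring
    rw [h, he]; push_cast; ring
  have hwre := w_re_nonneg α r
  have hcosh1 : (1:ℝ) ≤ Real.cosh r := Real.one_le_cosh r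
  have hcoshlb : Real.exp r / 2 ≤ Real.cosh r := by
    rw [Real.cosh_eq]
    have := (Real.exp_pos (-r)).le
    linarith
  have hdenre : Real.exp r / 2 ≤ ((Real.cosh r : ℂ) + w α r).re := by
    rw [Complex.add_re, Complex.ofReal_re]
    linarith
  have hdenne : (Real.cosh r : ℂ) + w α r ≠ 0 := by
    intro h
    rw [h] at hdenre
    simp at hdenre
    have := Real.exp_pos r
    linarith
  have h1α : (1 + α : ℂ) ≠ 0 := by
    intro h
    have h2 := congrArg Complex.re h
    simp [Complex.add_re, Complex.one_re] at h2
    linarith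
  have key : Bfun α r - (1 - α) / (1 + α)
      = 2 * (α * (Real.cosh r : ℂ) - w α r) / (((Real.cosh r : ℂ) + w α r) * (1 + α)) := by
    rw [Bfun, div_sub_div _ _ hdenne h1α]
    congr 1
    ring
  have hid : α * (Real.cosh r : ℂ) - w α r
      = (Real.exp r : ℂ) * ((α/2 - w α r * e) + α * ((Real.exp (-2*r) : ℝ) : ℂ)/2) := by
    rw [hE2]
    linear_combination (w α r - α * (Real.cosh r : ℂ)) * heer + α * (Real.exp r : ℂ) * hce
  have hnum : ‖α * (Real.cosh r : ℂ) - w α r‖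
      ≤ Real.exp r * ((K₁ + ‖α‖/2) * Real.exp (-2*r)) := by
    rw [hid, norm_mul, Complex.norm_real, Real.norm_eq_abs, abs_of_pos (Real.exp_pos _)]
    apply mul_le_mul_of_nonneg_left ?_ (Real.exp_pos r).le
    have t1 := norm_add_le (α/2 - w α r * e) (α * ((Real.exp (-2*r) : ℝ) : ℂ)/2)
    have t2 : ‖α/2 - w α r * e‖ = ‖w α r * e - α/2‖ := norm_sub_rev _ _
    have t3 : ‖α * ((Real.exp (-2*r) : ℝ) : ℂ)/2‖ = ‖α‖ * Real.exp (-2*r) / 2 := by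
      rw [norm_div, norm_mul, Complex.norm_real, Real.norm_eq_abs,
        abs_of_pos (Real.exp_pos _)]
      norm_num
    have h5 := hu r hr
    rw [← he] at h5
    rw [t2, t3] at t1
    calc ‖(α/2 - w α r * e) + α * ((Real.exp (-2*r) : ℝ) : ℂ)/2‖
        ≤ ‖w α r * e - α/2‖ + ‖α‖ * Real.exp (-2*r) / 2 := t1
      _ ≤ K₁ * Real.exp (-2*r) + ‖α‖ * Real.exp (-2*r) / 2 := by linarith
      _ = (K₁ + ‖α‖/2) * Real.exp (-2*r) := by ring
  have hden : Real.exp r / 2 ≤ ‖((Real.cosh r : ℂ) + w α r) * (1 + α)‖ := by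
    rw [norm_mul]
    have hd1 : Real.exp r / 2 ≤ ‖(Real.cosh r : ℂ) + w α r‖ := by
      refine le_trans hdenre ?_
      exact Complex.re_le_norm _
    have hd2 : (1:ℝ) ≤ ‖1 + α‖ := by
      have : (1:ℝ) ≤ (1 + α).re := by rw [Complex.add_re, Complex.one_re]; linarith
      refine le_trans this ?_
      exact Complex.re_le_norm _
    calc Real.exp r / 2 = Real.exp r / 2 * 1 := by ring
      _ ≤ ‖(Real.cosh r : ℂ) + w α r‖ * ‖1 + α‖ :=
          mul_le_mul hd1 hd2 zero_le_one (le_trans (by positivity) hd1)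
  rw [key, norm_div, norm_mul]
  have h2n : ‖(2:ℂ)‖ = 2 := by norm_num
  rw [h2n]
  calc 2 * ‖α * (Real.cosh r : ℂ) - w α r‖ / ‖((Real.cosh r : ℂ) + w α r) * (1 + α)‖
      ≤ (2 * (Real.exp r * ((K₁ + ‖α‖/2) * Real.exp (-2*r)))) / (Real.exp r / 2) := by
        apply div_le_div₀ (by positivity) (by linarith) (by positivity) hden
    _ = 4 * (K₁ + ‖α‖/2) * Real.exp (-2*r) := by
        field_simp
        ring

lemma log_split (α : ℂ) (r : ℝ) (hz : zfun α r ≠ 0) :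
    Complex.log ((α * (Real.cosh r : ℂ) + w α r) / ((α ^ 2 - 1) ^ (1 / 2 : ℂ)))
      = (r : ℂ) + Complex.log (zfun α r) := by
  have h1 : Real.exp r * Real.exp (-r) = 1 := by rw [← Real.exp_add]; simp
  have hprod : (α * (Real.cosh r : ℂ) + w α r) / ((α ^ 2 - 1) ^ (1 / 2 : ℂ))
      = (Real.exp r : ℂ) * zfun α r := by
    rw [zfun, ← mul_assoc, ← Complex.ofReal_mul, h1, Complex.ofReal_one, one_mul]
  rw [hprod, Complex.log_ofReal_mul (Real.exp_pos r) hz, Real.log_exp]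

/-- As `r → ∞`, `φ(α,r) = α r + q(α) + O(r⁻²)`. -/
theorem phi_asymptotic_infty (α : ℂ) (hre : 0 < α.re) (him : 0 < α.im) :
    ∃ C > (0 : ℝ), ∃ R > (0 : ℝ), ∀ r : ℝ, R < r →
      ‖phi α r - α * (r : ℂ) - qfun α‖ ≤ C / r ^ 2 := by
  obtain ⟨δ₁, hδ₁, L₁, hL₁, hlip₁⟩ := log_locally_lipschitz (zinf_slit α hre him)
  obtain ⟨δ₂, hδ₂, L₂, hL₂, hlip₂⟩ := log_locally_lipschitz (Binf_slit α him)
  obtain ⟨K₁, hK₁, hz⟩ := z_est α hre him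
  obtain ⟨K₂, hK₂, hB⟩ := B_est α hre him
  have hαne : α ≠ 0 := by
    intro h; rw [h] at hre; simp at hre
  have hzinfne : α / ((α ^ 2 - 1) ^ (1 / 2 : ℂ)) ≠ 0 := div_ne_zero hαne (S_ne α hre him)
  have hzinfpos : (0:ℝ) < ‖α / ((α ^ 2 - 1) ^ (1 / 2 : ℂ))‖ := norm_pos_iff.mpr hzinfne
  set N : ℝ := ‖α / ((α ^ 2 - 1) ^ (1 / 2 : ℂ))‖ with hN
  set C : ℝ := ‖α‖ * L₁ * K₁ + L₂ * K₂ with hC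
  have hCnn : 0 ≤ C := by
    have t1 : 0 ≤ ‖α‖ * L₁ * K₁ := mul_nonneg (mul_nonneg (norm_nonneg α) hL₁.le) hK₁.le
    have t2 : 0 ≤ L₂ * K₂ := mul_nonneg hL₂.le hK₂.le
    rw [hC]; linarith
  refine ⟨max C 1, lt_of_lt_of_le one_pos (le_max_right _ _),
    1 + K₁/δ₁ + K₂/δ₂ + K₁/N, by positivity, ?_⟩
  intro r hrR
  have hq1 : 0 ≤ K₁/δ₁ := by positivity
  have hq2 : 0 ≤ K₂/δ₂ := by positivity
  have hq3 : 0 ≤ K₁/N := by positivity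
  have hr1 : 1 ≤ r := by linarith
  have hrpos : 0 < r := by linarith
  have hexp_r : r ≤ Real.exp r := by linarith [Real.add_one_le_exp r]
  have hEpos : 0 < Real.exp (-2*r) := Real.exp_pos _
  have hEeq : Real.exp (-2*r) = 1/(Real.exp r)^2 := by
    rw [eq_div_iff (by positivity), pow_two, ← Real.exp_add, ← Real.exp_add]
    norm_num
    ring
  have hEr2 : Real.exp (-2*r) ≤ 1/r^2 := by
    rw [hEeq]
    apply one_div_le_one_div_of_le (by positivity)
    nlinarith
  have hEr : Real.exp (-2*r) ≤ 1/r := by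
    refine le_trans hEr2 ?_
    rw [div_le_div_iff₀ (by positivity) (by positivity)]
    nlinarith
  have hsmall₁ : K₁ * Real.exp (-2*r) ≤ δ₁ := by
    have h1 : K₁ * Real.exp (-2*r) ≤ K₁ * (1/r) := mul_le_mul_of_nonneg_left hEr hK₁.le
    have h3 : K₁/δ₁ < r := by linarith
    rw [div_lt_iff₀ hδ₁] at h3
    have h2 : K₁ * (1/r) < δ₁ := by
      rw [mul_one_div, div_lt_iff₀ hrpos]
      linarith
    linarith
  have hsmall₂ : K₂ * Real.exp (-2*r) ≤ δ₂ := by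
    have h1 : K₂ * Real.exp (-2*r) ≤ K₂ * (1/r) := mul_le_mul_of_nonneg_left hEr hK₂.le
    have h3 : K₂/δ₂ < r := by linarith
    rw [div_lt_iff₀ hδ₂] at h3
    have h2 : K₂ * (1/r) < δ₂ := by
      rw [mul_one_div, div_lt_iff₀ hrpos]
      linarith
    linarith
  have hsmallN : K₁ * Real.exp (-2*r) < N := by
    have h1 : K₁ * Real.exp (-2*r) ≤ K₁ * (1/r) := mul_le_mul_of_nonneg_left hEr hK₁.le
    have h3 : K₁/N < r := by linarith
    rw [div_lt_iff₀ hzinfpos] at h3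
    have h2 : K₁ * (1/r) < N := by
      rw [mul_one_div, div_lt_iff₀ hrpos]
      linarith
    linarith
  have hzd := hz r hr1
  have hBd := hB r hr1
  have hzδ : ‖zfun α r - α / ((α ^ 2 - 1) ^ (1 / 2 : ℂ))‖ ≤ δ₁ := le_trans hzd hsmall₁
  have hBδ : ‖Bfun α r - (1 - α) / (1 + α)‖ ≤ δ₂ := le_trans hBd hsmall₂
  have hzne : zfun α r ≠ 0 := by
    intro h
    rw [h, zero_sub, norm_neg] at hzd
    rw [← hN] at hzd
    linarith
  have hsplit := log_split α r hzne
  have main_eq : phi α r - α * (r : ℂ) - qfun α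
      = α * (Complex.log (zfun α r) - Complex.log (α / ((α ^ 2 - 1) ^ (1 / 2 : ℂ))))
        + (1/2 : ℂ) * (Complex.log (Bfun α r) - Complex.log ((1 - α)/(1 + α))) := by
    simp only [phi, qfun]
    rw [hsplit,
      show ((Real.cosh r : ℂ) - w α r) / ((Real.cosh r : ℂ) + w α r) = Bfun α r from rfl]
    ring
  have b₁ : ‖Complex.log (zfun α r) - Complex.log (α / ((α ^ 2 - 1) ^ (1 / 2 : ℂ)))‖
      ≤ L₁ * (K₁ * Real.exp (-2*r)) :=
    le_trans (hlip₁ _ hzδ) (mul_le_mul_of_nonneg_left hzd hL₁.le)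
  have b₂ : ‖Complex.log (Bfun α r) - Complex.log ((1 - α)/(1 + α))‖
      ≤ L₂ * (K₂ * Real.exp (-2*r)) :=
    le_trans (hlip₂ _ hBδ) (mul_le_mul_of_nonneg_left hBd hL₂.le)
  rw [main_eq]
  calc ‖α * (Complex.log (zfun α r) - Complex.log (α / ((α ^ 2 - 1) ^ (1 / 2 : ℂ))))
        + (1/2 : ℂ) * (Complex.log (Bfun α r) - Complex.log ((1 - α)/(1 + α)))‖
      ≤ ‖α * (Complex.log (zfun α r) - Complex.log (α / ((α ^ 2 - 1) ^ (1 / 2 : ℂ))))‖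
        + ‖(1/2 : ℂ) * (Complex.log (Bfun α r) - Complex.log ((1 - α)/(1 + α)))‖ :=
        norm_add_le _ _
    _ = ‖α‖ * ‖Complex.log (zfun α r) - Complex.log (α / ((α ^ 2 - 1) ^ (1 / 2 : ℂ)))‖
        + (1/2) * ‖Complex.log (Bfun α r) - Complex.log ((1 - α)/(1 + α))‖ := by
        rw [norm_mul, norm_mul]
        norm_num
    _ ≤ ‖α‖ * (L₁ * (K₁ * Real.exp (-2*r))) + (1/2) * (L₂ * (K₂ * Real.exp (-2*r))) :=
        add_le_add (mul_le_mul_of_nonneg_left b₁ (norm_nonneg α))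
          (mul_le_mul_of_nonneg_left b₂ (by norm_num))
    _ ≤ C * Real.exp (-2*r) := by
        rw [hC]
        nlinarith [mul_nonneg (mul_nonneg hL₂.le hK₂.le) hEpos.le]
    _ ≤ C * (1/r^2) := mul_le_mul_of_nonneg_left hEr2 hCnn
    _ = C / r^2 := by ring
    _ ≤ max C 1 / r^2 := by
        gcongr
        exact le_max_left C 1
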